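/- Let 𝒮 be a thick triangulated subcategory of a triangulated category 𝒯 and Q : 𝒯 → 𝒯/𝒮 the Verdier quotient functor. If Q admits a right adjoint R, then the pair (𝒮, 𝒮^⊥) is a torsion pair (semiorthogonal decomposition) of 𝒯: for every T ∈ 𝒯 there is a distinguished triangle S → T → Z → S[1] with S ∈ 𝒮 and Z ∈ 𝒮^⊥, where 𝒮^⊥ = {X ∈ 𝒯 : Hom(S,X) = 0 for all S ∈ 𝒮}. -/

import Mathlib

open CategoryTheory Limits Pretriangulated

universe v u

/-- Let `𝒮` be a thick triangulated subcategory of a triangulated category `𝒯` and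
`Q : 𝒯 ⥤ 𝒯/𝒮` the Verdier quotient functor (a localization with respect to the class
`𝒮.W` of morphisms whose cone lies in `𝒮`).  If `Q` admits a right adjoint `R`, then
`(𝒮, 𝒮^⊥)` is a torsion pair: every `T` fits into a distinguished triangle
`S ⟶ T ⟶ Z ⟶ S⟦1⟧` with `S ∈ 𝒮` and `Z ∈ 𝒮^⊥`. -/
theorem stmt18 {𝒯 : Type u} [Category.{v} 𝒯] [HasZeroObject 𝒯] [HasShift 𝒯 ℤ]
    [Preadditive 𝒯] [∀ n : ℤ, (shiftFunctor 𝒯 n).Additive] [Pretriangulated 𝒯]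
    [IsTriangulated 𝒯]
    (𝒮 : ObjectProperty 𝒯) [𝒮.IsTriangulated]
    (hthick : ∀ X Y : 𝒯, 𝒮 Y → ∀ (s : X ⟶ Y) (r : Y ⟶ X), s ≫ r = 𝟙 X → 𝒮 X)
    {𝒟 : Type*} [Category 𝒟] (Q : 𝒯 ⥤ 𝒟) [Q.IsLocalization 𝒮.trW]
    (R : 𝒟 ⥤ 𝒯) (adj : Q ⊣ R) :
    ∀ T : 𝒯, ∃ (S Z : 𝒯) (f : S ⟶ T) (g : T ⟶ Z) (h : Z ⟶ S⟦(1 : ℤ)⟧),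
      (Triangle.mk f g h ∈ distTriang 𝒯) ∧ 𝒮 S ∧
        (∀ (W : 𝒯), 𝒮 W → ∀ u : W ⟶ Z, u = 0) := by
  intro T
  obtain ⟨S, f, h, hT⟩ := distinguished_cocone_triangle₁ (adj.unit.app T)
  refine ⟨S, R.obj (Q.obj T), f, adj.unit.app T, h, hT, ?_, ?_⟩
  · -- `𝒮.P S`
    -- Step 1: `Q.map (adj.unit.app T)` is an isomorphism
    have hQη : IsIso (Q.map (adj.unit.app T)) := by
      let θ : Q ⟶ Q ⋙ (R ⋙ Q) :=
        { app := fun X => Q.map (adj.unit.app X)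
          naturality := fun A B g => by
            dsimp
            rw [← Q.map_comp, ← Q.map_comp]
            congr 1
            exact adj.unit.naturality g }
      let τ : 𝟭 𝒟 ⟶ R ⋙ Q :=
        Localization.liftNatTrans Q 𝒮.trW Q (Q ⋙ (R ⋙ Q)) (𝟭 𝒟) (R ⋙ Q) θ
      have key : ∀ (X : 𝒯), τ.app (Q.obj X) = Q.map (adj.unit.app X) := fun X => by
        simp [τ, θ, Localization.liftNatTrans_app, Localization.Lifting.iso]
      refine ⟨adj.counit.app (Q.obj T), adj.left_triangle_components T, ?_⟩
      have hnat := τ.naturality (adj.counit.app (Q.obj T))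
      dsimp at hnat
      rw [key T, key (R.obj (Q.obj T))] at hnat
      rw [hnat, ← Q.map_comp, adj.right_triangle_components]
      simp
    -- Step 2: transfer to the canonical localization `𝒮.W.Q`
    let L := 𝒮.trW.Q
    have hLη : IsIso (L.map (adj.unit.app T)) := by
      let e : Q ⋙ (Localization.uniq Q L 𝒮.trW).functor ≅ L :=
        Localization.compUniqFunctor Q L 𝒮.trW
      rw [← NatIso.naturality_1 e (adj.unit.app T)]
      dsimp
      infer_instance
    haveI : L.IsTriangulated := ⟨fun T' hT' => ⟨T', Iso.refl _, hT'⟩⟩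
    have hmap := L.map_distinguished _ hT
    have hz : IsZero (L.obj S) :=
      (Triangle.isZero₁_iff_isIso₂ _ hmap).2 (by dsimp; exact hLη)
    have heq : L.map (𝟙 S) = L.map (0 : S ⟶ S) := hz.eq_of_src _ _
    rw [MorphismProperty.map_eq_iff_postcomp L 𝒮.trW] at heq
    obtain ⟨Y₁, s, hs, fac⟩ := heq
    rw [Category.id_comp, Limits.zero_comp] at fac
    subst fac
    rw [𝒮.trW_iff] at hs
    obtain ⟨Z₂, g₂, h₂, hdist, hP⟩ := hs
    have hrot := rot_of_distTriang _ hdist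
    obtain ⟨r, hr⟩ := Triangle.coyoneda_exact₃ _ hrot (𝟙 (S⟦(1:ℤ)⟧)) (by
      dsimp [Triangle.rotate]
      exact (Category.id_comp _).trans (neg_eq_zero.2 (Functor.map_zero _ _ _)))
    have h1 : 𝒮 (S⟦(1:ℤ)⟧) := hthick _ _ hP r h₂ hr.symm
    have h2 : 𝒮 ((S⟦(1:ℤ)⟧)⟦(-1:ℤ)⟧) := 𝒮.le_shift (-1 : ℤ) _ h1
    exact hthick S _ h2 (shiftShiftNeg S 1).inv (shiftShiftNeg S 1).hom
      (Iso.inv_hom_id _)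
  · -- orthogonality
    intro W₀ hW₀ u
    have hsW : 𝒮.trW (contractibleTriangle W₀).mor₂ :=
      ObjectProperty.trW.mk' 𝒮 (contractible_distinguished W₀) hW₀
    have hQs : IsIso (Q.map (contractibleTriangle W₀).mor₂) :=
      Localization.inverts Q 𝒮.trW _ hsW
    set v := (adj.homEquiv W₀ (Q.obj T)).symm u with hv
    have hu : u = adj.homEquiv _ _ v := ((adj.homEquiv _ _).apply_symm_apply u).symm
    have hv2 : v = Q.map (contractibleTriangle W₀).mor₂ ≫
        (inv (Q.map (contractibleTriangle W₀).mor₂) ≫ v) := by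
      erw [← Category.assoc, IsIso.hom_inv_id, Category.id_comp]
    erw [hv2, Adjunction.homEquiv_naturality_left] at hu
    rw [hu]
    exact Limits.zero_comp
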